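/- Let S be a semigroup and let (A_q)_{q≥1} be a sequence of subsets of S which is asymptotically strictly decreasing, meaning A_{q+1} ⊆ A_q for all q ≥ 1 and A_q ≠ A_{q+1} for infinitely many q. Then 1 belongs to the product intersection set H_ℕ^S(A_q). Consequently, combined with the realization of every X ∋ 1, the global set H_ℕ* of all product intersection sets of asymptotically strictly decreasing sequences in arbitrary semigroups equals {X ⊆ ℕ : 1 ∈ X}. -/

import Mathlib

open Pointwise

/-- The `h`-fold product set `B^h = {b₁ ⋯ b_h : b₁, …, b_h ∈ B}` for `h ≥ 1`
(the value at `h = 0` is junk). -/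
def prodSet {S : Type*} [Mul S] (B : Set S) : ℕ → Set S
  | 0 => ∅
  | 1 => B
  | n + 2 => prodSet B (n + 1) * B

namespace Stmt11


lemma prodSet_one {S : Type*} [Mul S] (B : Set S) : prodSet B 1 = B := rfl

lemma prodSet_succ {S : Type*} [Mul S] (B : Set S) (n : ℕ) :
    prodSet B (n + 2) = prodSet B (n + 1) * B := rfl

lemma prodSet_mono {S : Type*} [Mul S] {B C : Set S} (h : B ⊆ C) :
    ∀ n, prodSet B n ⊆ prodSet C n
  | 0 => subset_rfl
  | 1 => h
  | n + 2 => by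
      rw [prodSet_succ, prodSet_succ]
      exact Set.mul_subset_mul (prodSet_mono h (n + 1)) h

lemma prodSet_singleton {M : Type*} [Monoid M] (x : M) :
    ∀ n, 1 ≤ n → prodSet {x} n = {x ^ n}
  | 1, _ => by simp [prodSet_one]
  | n + 2, _ => by
      rw [prodSet_succ, prodSet_singleton x (n + 1) (by omega),
        Set.singleton_mul_singleton, ← pow_succ]

lemma mem_prodSet_list {M : Type*} [Monoid M] (B : Set M) :
    ∀ n, 1 ≤ n → ∀ f : M,
      (f ∈ prodSet B n ↔ ∃ l : List M, l.length = n ∧ (∀ g ∈ l, g ∈ B) ∧ l.prod = f)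
  | 1, _, f => by
      constructor
      · intro hf; exact ⟨[f], rfl, by simpa [prodSet_one] using hf, by simp⟩
      · rintro ⟨l, hl, hmem, hprod⟩
        match l, hl with
        | [g], _ => 
          have : g = f := by simpa using hprod
          exact this ▸ hmem g (by simp)
  | n + 2, _, f => by
      rw [prodSet_succ]
      constructor
      · intro hf
        rw [Set.mem_mul] at hf
        obtain ⟨g, hg, b, hb, hgb⟩ := hf
        obtain ⟨l, hl, hmem, hprod⟩ := (mem_prodSet_list B (n + 1) (by omega) g).1 hg
        exact ⟨l ++ [b], by simp [hl], by
          intro x hx; rcases List.mem_append.1 hx with h | h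
          · exact hmem x h
          · simpa using (List.mem_singleton.1 h) ▸ hb, by simp [hprod, hgb]⟩
      · rintro ⟨l, hl, hmem, hprod⟩
        rcases l.eq_nil_or_concat with rfl | ⟨L, b, rfl⟩
        · simp at hl
        · rw [Set.mem_mul]
          refine ⟨L.prod, ?_, b, hmem b (by simp), by simpa using hprod⟩
          exact (mem_prodSet_list B (n + 1) (by omega) L.prod).2
            ⟨L, by simpa using hl, fun g hg => hmem g (by simp [hg]), rfl⟩


abbrev St (m : ℕ) : Type := ℕ × ℕ × (ℕ → ZMod m)
variable (m : ℕ)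
def La : St m → St m := fun x => (x.1 + 1 + m * x.2.1, 0, x.2.2)
def Fc (k s : ℕ) : ℕ × ℕ := if k = 0 ∧ s = 0 then (0, 1) else (k + m * (s + 1), 0)
def Le (j : ℕ) : St m → St m := fun x =>
  if x.2.2 j + 1 = 0 then
    ((Fc m x.1 x.2.1).1, (Fc m x.1 x.2.1).2, Function.update x.2.2 j (x.2.2 j + 1))
  else (x.1, x.2.1, Function.update x.2.2 j (x.2.2 j + 1))
def Za : St m → St m := fun x => ((Fc m x.1 x.2.1).1, (Fc m x.1 x.2.1).2, x.2.2)

lemma La_Le_comm (j : ℕ) (x : St m) : La m (Le m j x) = Le m j (La m x) := by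
  unfold La Le Fc
  by_cases h : x.2.2 j + 1 = 0 <;> by_cases h2 : x.1 = 0 ∧ x.2.1 = 0 <;>
      simp [h, h2, Nat.add_eq_zero, Prod.ext_iff] <;> ring_nf

lemma Le_Le_comm (j j' : ℕ) (x : St m) : Le m j (Le m j' x) = Le m j' (Le m j x) := by
  rcases eq_or_ne j j' with rfl | hne
  · rfl
  unfold Le
  by_cases h1 : x.2.2 j + 1 = 0 <;> by_cases h2 : x.2.2 j' + 1 = 0 <;>
    simp [Function.update_of_ne hne, Function.update_of_ne hne.symm, h1, h2,
      Function.update_comm hne, Prod.ext_iff]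

lemma La_iterate : ∀ n, 1 ≤ n → ∀ x : St m,
    (La m)^[n] x = (x.1 + n + m * x.2.1, 0, x.2.2)
  | 1, _, x => by simp [La]
  | n + 2, _, x => by
      rw [Function.iterate_succ_apply', La_iterate (n + 1) (by omega) x]
      simp [La, Prod.ext_iff]
      ring

lemma End_pow_apply {α : Type*} (f : Function.End α) : ∀ n (x : α), (f ^ n) x = f^[n] x
  | 0, x => rfl
  | n + 1, x => by
      show (f ^ n) (f x) = f^[n] (f x)
      exact End_pow_apply f n (f x)

lemma Za_Za (hm : 1 ≤ m) (x : St m) : Za m (Za m x) = (La m)^[2 * m] x := by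
  have hm0 : ¬ (m = 0) := by omega
  rw [La_iterate m (2 * m) (by omega) x]
  unfold Za Fc
  by_cases h2 : x.1 = 0 ∧ x.2.1 = 0 <;>
    simp [h2, Nat.add_eq_zero, hm0, Prod.ext_iff] <;> first | omega | ring_nf

lemma Za_La_iterate (hm : 1 ≤ m) (r : ℕ) (hr : 1 ≤ r) (x : St m) :
    Za m ((La m)^[r] x) = (La m)^[r + m] x := by
  have hm0 : ¬ (m = 0) := by omega
  rw [La_iterate m r hr x, La_iterate m (r + m) (by omega) x]
  unfold Za Fc
  have hr0 : r ≠ 0 := by omega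
  simp [Nat.add_eq_zero, hm0, hr0, Prod.ext_iff]
  ring

lemma La_iterate_Za (hm : 1 ≤ m) (r : ℕ) (hr : 1 ≤ r) (x : St m) :
    (La m)^[r] (Za m x) = (La m)^[r + m] x := by
  rw [La_iterate m r hr _, La_iterate m (r + m) (by omega) x]
  unfold Za Fc
  by_cases h2 : x.1 = 0 ∧ x.2.1 = 0 <;>
    simp [h2, Nat.add_eq_zero, Prod.ext_iff] <;> first | omega | ring_nf

variable {m} in
lemma not_dvd_between {t : ℕ} (h1 : m < t) (h2 : t < 2 * m) : ¬ m ∣ t := by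
  intro hdvd
  obtain ⟨c, hc⟩ := hdvd
  have h3 : m * 1 < m * c := by omega
  have h4 : 1 < c := Nat.lt_of_mul_lt_mul_left h3
  have h5 : m * 2 ≤ m * c := Nat.mul_le_mul_left m h4
  omega

lemma Le_iterate (hm : 2 ≤ m) (j : ℕ) : ∀ r, r ≤ m → ∀ x : St m,
    (Le m j)^[r] x =
      if m ≤ (x.2.2 j).val + r then
        ((Fc m x.1 x.2.1).1, (Fc m x.1 x.2.1).2, Function.update x.2.2 j (x.2.2 j + (r : ZMod m)))
      else (x.1, x.2.1, Function.update x.2.2 j (x.2.2 j + (r : ZMod m))) := by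
  haveI : NeZero m := ⟨by omega⟩
  intro r
  induction r with
  | zero =>
      intro _ x
      have hv : (x.2.2 j).val < m := ZMod.val_lt _
      rw [if_neg (by omega)]
      simp [Function.update_eq_self]
  | succ r ih =>
      intro hr x
      have hv : (x.2.2 j).val < m := ZMod.val_lt _
      rw [Function.iterate_succ_apply', ih (by omega) x]
      have castkey : ∀ (t : ℕ), (x.2.2 j + (t : ZMod m) = 0) ↔ (m ∣ (x.2.2 j).val + t) := by
        intro t
        rw [← ZMod.natCast_zmod_val (x.2.2 j), ← Nat.cast_add, ZMod.natCast_eq_zero_iff]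
        simp [ZMod.natCast_zmod_val]
      have pushc : (x.2.2 j + (r : ZMod m)) + 1 = x.2.2 j + ((r + 1 : ℕ) : ZMod m) := by
        push_cast; ring
      by_cases hc : m ≤ (x.2.2 j).val + r
      · rw [if_pos hc, if_pos (by omega)]
        have hnd : ¬ (x.2.2 j + ((r + 1 : ℕ) : ZMod m) = 0) := by
          rw [castkey]
          exact not_dvd_between (by omega) (by omega)
        simp only [Le, Function.update_self, pushc, if_neg hnd]
        simp [Function.update_idem]
      · rw [if_neg hc]
        have hle : (x.2.2 j).val + (r + 1) ≤ m := by omega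
        by_cases heq : (x.2.2 j).val + (r + 1) = m
        · rw [if_pos (by omega)]
          have hd : x.2.2 j + ((r + 1 : ℕ) : ZMod m) = 0 := by
            rw [castkey, heq]
          simp only [Le, Function.update_self, pushc, if_pos hd]
          simp [Function.update_idem]
        · rw [if_neg (by omega)]
          have hnd : ¬ (x.2.2 j + ((r + 1 : ℕ) : ZMod m) = 0) := by
            rw [castkey]
            intro hdvd
            have := Nat.le_of_dvd (by omega) hdvd
            omega
          simp only [Le, Function.update_self, pushc, if_neg hnd]
          simp [Function.update_idem]

lemma Le_iterate_m (hm : 2 ≤ m) (j : ℕ) (x : St m) : (Le m j)^[m] x = Za m x := by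
  haveI : NeZero m := ⟨by omega⟩
  rw [Le_iterate m hm j m le_rfl x, if_pos (by have := ZMod.val_lt (x.2.2 j); omega)]
  simp [Za, ZMod.natCast_self, Function.update_eq_self]



/-- letter interpretation on a single component: `none ↦ La`, `some j ↦ Le j` -/
def compA (o : Option ℕ) : Function.End (St m) := o.elim (La m) (Le m)

lemma compA_commute (o o' : Option ℕ) : Commute (compA m o) (compA m o') := by
  have key : ∀ x, compA m o (compA m o' x) = compA m o' (compA m o x) := by
    intro x
    match o, o' with
    | none, none => rfl
    | none, some j => exact La_Le_comm m j x
    | some j, none => exact (La_Le_comm m j x).symm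
    | some j, some j' => exact Le_Le_comm m j j' x
  exact funext key

lemma PPcomm (μ : Multiset (Option ℕ)) : {x | x ∈ μ.map (compA m)}.Pairwise Commute := by
  intro f hf g hg _
  simp only [Set.mem_setOf_eq, Multiset.mem_map] at hf hg
  obtain ⟨o, _, rfl⟩ := hf
  obtain ⟨o', _, rfl⟩ := hg
  exact compA_commute m o o'

/-- the composite endomorphism attached to a multiset of letters -/
def PP (μ : Multiset (Option ℕ)) : Function.End (St m) :=
  (μ.map (compA m)).noncommProd (PPcomm m μ)

lemma noncommProd_hcongr {M : Type*} [Monoid M] {s t : Multiset M} (h : s = t)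
    (c : {x | x ∈ s}.Pairwise Commute) (c' : {x | x ∈ t}.Pairwise Commute) :
    s.noncommProd c = t.noncommProd c' := by subst h; rfl

lemma PP_coe (l : List (Option ℕ)) : PP m ↑l = (l.map (compA m)).prod := by
  rw [PP, noncommProd_hcongr (show ((l : Multiset (Option ℕ)).map (compA m)) =
    ((l.map (compA m) : List _) : Multiset _) from rfl) _
    (by rw [show ((l.map (compA m) : List _) : Multiset _) = ((l : Multiset (Option ℕ)).map (compA m)) from rfl]; exact PPcomm m l)]
  exact Multiset.noncommProd_coe _ _

lemma PP_add (μ ν : Multiset (Option ℕ)) : PP m (μ + ν) = PP m μ * PP m ν := by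
  rw [PP, noncommProd_hcongr (Multiset.map_add (compA m) μ ν) _
    (by rw [← Multiset.map_add]; exact PPcomm m (μ + ν)),
    Multiset.noncommProd_add]
  rfl

lemma PP_replicate (n : ℕ) (o : Option ℕ) :
    PP m (Multiset.replicate n o) = (compA m o) ^ n := by
  rw [PP, noncommProd_hcongr (Multiset.map_replicate (compA m) n o) _
    (by rw [← Multiset.map_replicate]; exact PPcomm m _)]
  rw [Multiset.noncommProd_eq_pow_card _ _ (compA m o)
    (fun x hx => Multiset.eq_of_mem_replicate hx), Multiset.card_replicate]

def endA : Function.End (St m) := La m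
def endZ : Function.End (St m) := Za m

lemma PP_zero : PP m 0 = 1 := by
  rw [show (0 : Multiset (Option ℕ)) = Multiset.replicate 0 none from rfl, PP_replicate, pow_zero]

/-- The key collapsing lemma. -/
lemma core (hm : 2 ≤ m) : ∀ n, ∀ μ : Multiset (Option ℕ), μ.card = n → 1 ≤ n →
    (∀ j : ℕ, m ∣ μ.count (some j)) →
    (μ.count none = 0 ∧ n = m ∧ PP m μ = endZ m) ∨ PP m μ = endA m ^ n := by
  intro n
  induction n using Nat.strong_induction_on with
  | _ n ih =>
    intro μ hcard hn hdiv
    by_cases hsome : ∃ j, some j ∈ μ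
    · obtain ⟨j, hj⟩ := hsome
      have hcnt : m ≤ μ.count (some j) :=
        Nat.le_of_dvd (Multiset.count_pos.mpr hj) (hdiv j)
      have hle : Multiset.replicate m (some j) ≤ μ := by
        rw [Multiset.le_iff_count]
        intro a
        rw [Multiset.count_replicate]
        split
        · next h => rw [← h]; exact hcnt
        · exact Nat.zero_le _
      have hmn : m ≤ n := by
        have := Multiset.card_le_card hle
        rwa [hcard, Multiset.card_replicate] at this
      set μ' := μ - Multiset.replicate m (some j) with hμ'
      have hsum : μ' + Multiset.replicate m (some j) = μ := tsub_add_cancel_of_le hle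
      have hcard' : μ'.card = n - m := by
        rw [hμ', Multiset.card_sub hle, hcard, Multiset.card_replicate]
      have hdiv' : ∀ j' : ℕ, m ∣ μ'.count (some j') := by
        intro j'
        rw [hμ', Multiset.count_sub, Multiset.count_replicate]
        split
        · next h => exact Nat.dvd_sub (hdiv j') dvd_rfl
        · rw [Nat.sub_zero]; exact hdiv j'
      have hzm : (compA m (some j)) ^ m = endZ m := by
        funext x
        rw [End_pow_apply]
        exact Le_iterate_m m hm j x
      have hPP : PP m μ = PP m μ' * endZ m := by
        rw [← hsum, PP_add, PP_replicate, hzm]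
      have hcnone : μ.count none = μ'.count none := by
        conv_lhs => rw [← hsum]
        simp [Multiset.count_replicate]
      by_cases hc0 : μ'.card = 0
      · have hz0 : μ' = 0 := Multiset.card_eq_zero.mp hc0
        left
        have hnm : n = m := by
          rw [hz0] at hcard'; simp at hcard'; omega
        refine ⟨?_, hnm, ?_⟩
        · rw [hcnone, hz0]; rfl
        · rw [hPP, hz0, PP_zero, one_mul]
      · have h1' : 1 ≤ μ'.card := by omega
        have hlt : n - m < n := by omega
        rcases ih (n - m) hlt μ' hcard' (by omega) hdiv' with ⟨hc, hnm, hz⟩ | hA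
        · right
          have hn2m : n = 2 * m := by omega
          rw [hPP, hz]
          funext x
          rw [End_pow_apply]
          show Za m (Za m x) = _
          rw [Za_Za m (by omega) x, hn2m]
          rfl
        · right
          rw [hPP, hA]
          funext x
          rw [End_pow_apply]
          show (endA m ^ (n - m) : Function.End (St m)) (Za m x) = (La m)^[n] x
          rw [End_pow_apply]
          show (La m)^[n - m] (Za m x) = _
          rw [La_iterate_Za m (by omega) (n - m) (by omega) x, Nat.sub_add_cancel hmn]
    · push_neg at hsome
      have hrep : μ = Multiset.replicate n none := by
        rw [Multiset.eq_replicate]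
        refine ⟨hcard, fun x hx => ?_⟩
        cases x with
        | none => rfl
        | some j => exact absurd hx (hsome j)
      right
      rw [hrep, PP_replicate]
      rfl

lemma Le_c_apply (j : ℕ) (x : St m) :
    (Le m j x).2.2 = Function.update x.2.2 j (x.2.2 j + 1) := by
  unfold Le; split <;> rfl

lemma La_c_apply (x : St m) : (La m x).2.2 = x.2.2 := rfl

lemma c_value (v : List (Option ℕ)) (x : St m) (j : ℕ) :
    (((v.map (compA m)).prod) x).2.2 j
      = x.2.2 j + ((Multiset.count (some j) ↑v : ℕ) : ZMod m) := by
  induction v with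
  | nil => simp; rfl
  | cons o v ih =>
      rw [List.map_cons, List.prod_cons]
      have : ((compA m o * (v.map (compA m)).prod : Function.End (St m))) x
          = compA m o (((v.map (compA m)).prod) x) := rfl
      rw [this]
      set y := ((v.map (compA m)).prod) x with hy
      cases o with
      | none =>
          show (La m y).2.2 j = _
          rw [La_c_apply, ih]
          rw [show ((none :: v : List (Option ℕ)) : Multiset (Option ℕ))
            = none ::ₘ ↑v from rfl, Multiset.count_cons]
          simp
      | some j' =>
          show (Le m j' y).2.2 j = _
          rw [show (Le m j' y).2.2 = Function.update y.2.2 j' (y.2.2 j' + 1) from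
            Le_c_apply m j' y]
          rw [show ((some j' :: v : List (Option ℕ)) : Multiset (Option ℕ))
            = some j' ::ₘ ↑v from rfl, Multiset.count_cons]
          rcases eq_or_ne j j' with rfl | hne
          · rw [Function.update_self, ih]
            simp
            push_cast
            ring
          · rw [Function.update_of_ne hne, ih]
            simp [hne]

/-! ### The global construction -/

section Global

variable (X : Set ℕ)

/-- index type: the "bad" exponents -/
def Idx : Type := {m : ℕ // m ∉ X ∧ m ≠ 0}

instance : DecidableEq (Idx X) := inferInstanceAs (DecidableEq {m : ℕ // m ∉ X ∧ m ≠ 0})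

/-- state space of the global gadget -/
def Ca : Type := ∀ i : Idx X, St i.1

/-- the `a`-generator -/
def aAct : Function.End (Ca X) := fun x i => La i.1 (x i)

/-- the `e`-generators -/
def eAct (i₀ : Idx X) (j : ℕ) : Function.End (Ca X) :=
  fun x i => if i = i₀ then Le i.1 j (x i) else La i.1 (x i)

/-- letters -/
def Lam : Type := Option (Idx X × ℕ)

def ActL : Lam X → Function.End (Ca X) := fun ℓ => ℓ.elim (aAct X) fun p => eAct X p.1 p.2

def proj (i : Idx X) : Lam X → Option ℕ :=
  fun ℓ => ℓ.bind fun p => if p.1 = i then some p.2 else none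

def pt0 : Ca X := fun _ => (0, 0, fun _ => 0)

lemma two_le (h1X : 1 ∈ X) (i : Idx X) : 2 ≤ i.1 := by
  obtain ⟨m, hm1, hm2⟩ := i
  show 2 ≤ m
  rcases m with _ | _ | m
  · exact absurd rfl hm2
  · exact absurd h1X hm1
  · omega

lemma ActL_apply (ℓ : Lam X) (x : Ca X) (i : Idx X) :
    ActL X ℓ x i = compA i.1 (proj X i ℓ) (x i) := by
  match ℓ with
  | none => rfl
  | some (i', j) =>
      show eAct X i' j x i = _
      unfold eAct proj
      rcases eq_or_ne i' i with rfl | hne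
      · simp [compA]; rfl
      · simp [hne, Ne.symm hne, compA]; rfl

lemma prod_component (w : List (Lam X)) (x : Ca X) (i : Idx X) :
    ((w.map (ActL X)).prod) x i
      = (((w.map (proj X i)).map (compA i.1)).prod) (x i) := by
  induction w with
  | nil => rfl
  | cons ℓ w ih =>
      simp only [List.map_cons, List.prod_cons]
      have h1 : ((ActL X ℓ * (w.map (ActL X)).prod : Function.End (Ca X))) x
          = ActL X ℓ (((w.map (ActL X)).prod) x) := rfl
      have h2 : ((compA i.1 (proj X i ℓ) * ((w.map (proj X i)).map (compA i.1)).prod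
          : Function.End (St i.1))) (x i)
          = compA i.1 (proj X i ℓ) ((((w.map (proj X i)).map (compA i.1)).prod) (x i)) := rfl
      rw [h1, h2, ActL_apply, ih]

lemma aAct_pow_apply : ∀ (h : ℕ) (x : Ca X) (i : Idx X),
    (aAct X ^ h) x i = (La i.1)^[h] (x i)
  | 0, x, i => rfl
  | h + 1, x, i => by
      rw [pow_succ, Function.iterate_succ_apply]
      have : ((aAct X ^ h * aAct X : Function.End (Ca X))) x = (aAct X ^ h) (aAct X x) := rfl
      rw [this, aAct_pow_apply h (aAct X x) i]
      rfl

lemma eAct_pow_apply (i₀ : Idx X) (j : ℕ) : ∀ (h : ℕ) (x : Ca X) (i : Idx X),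
    (eAct X i₀ j ^ h) x i = (if i = i₀ then Le i.1 j else La i.1)^[h] (x i)
  | 0, x, i => rfl
  | h + 1, x, i => by
      rw [pow_succ, Function.iterate_succ_apply]
      have : ((eAct X i₀ j ^ h * eAct X i₀ j : Function.End (Ca X))) x
          = (eAct X i₀ j ^ h) (eAct X i₀ j x) := rfl
      rw [this, eAct_pow_apply i₀ j h (eAct X i₀ j x) i]
      have : eAct X i₀ j x i = (if i = i₀ then Le i.1 j else La i.1) (x i) := by
        unfold eAct; split <;> rfl
      rw [this]


lemma one_ne_zero_zmod {m : ℕ} (hm : 2 ≤ m) : (1 : ZMod m) ≠ 0 := by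
  haveI : NeZero m := ⟨by omega⟩
  intro h
  rw [show (1 : ZMod m) = ((1 : ℕ) : ZMod m) by push_cast; rfl,
    ZMod.natCast_eq_zero_iff] at h
  have := Nat.le_of_dvd (by omega) h
  omega

lemma eAct_apply_pt0 (h1X : 1 ∈ X) (i₀ i : Idx X) (j : ℕ) :
    eAct X i₀ j (pt0 X) i = if i = i₀ then
      ((0 : ℕ), (0 : ℕ), Function.update (fun _ => (0 : ZMod i.1)) j 1)
    else ((1 : ℕ), (0 : ℕ), fun _ => (0 : ZMod i.1)) := by
  have hne1 : ((1 : ZMod i.1)) ≠ 0 := one_ne_zero_zmod (two_le X h1X i)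
  unfold eAct pt0 Le La
  rcases eq_or_ne i i₀ with rfl | hne
  · simp [hne1]
  · simp [hne]

lemma aAct_apply_pt0 (i : Idx X) :
    aAct X (pt0 X) i = ((1 : ℕ), (0 : ℕ), fun _ => (0 : ZMod i.1)) := by
  unfold aAct pt0 La; simp

lemma eAct_ne_aAct (h1X : 1 ∈ X) (i : Idx X) (j : ℕ) : eAct X i j ≠ aAct X := by
  intro h
  have h0 := congrFun (congrFun h (pt0 X)) i
  rw [eAct_apply_pt0 X h1X i i j, if_pos rfl, aAct_apply_pt0 X i] at h0
  simp at h0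

lemma eAct_inj (h1X : 1 ∈ X) (i i' : Idx X) (j j' : ℕ)
    (h : eAct X i j = eAct X i' j') : i = i' ∧ j = j' := by
  have hii : i = i' := by
    by_contra hne
    have h0 := congrFun (congrFun h (pt0 X)) i
    rw [eAct_apply_pt0 X h1X i i j, if_pos rfl, eAct_apply_pt0 X h1X i' i j',
      if_neg hne] at h0
    simp at h0
  subst hii
  refine ⟨rfl, ?_⟩
  by_contra hne
  have h0 := congrFun (congrFun h (pt0 X)) i
  rw [eAct_apply_pt0 X h1X i i j, if_pos rfl, eAct_apply_pt0 X h1X i i j',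
    if_pos rfl] at h0
  have hc := congrArg (fun p => p.2.2 j) h0
  simp only [Function.update_self] at hc
  rw [Function.update_of_ne hne] at hc
  exact one_ne_zero_zmod (two_le X h1X i) (by simpa using hc)

/-- the decreasing family of generator sets -/
def ASet (q : ℕ+) : Set (Function.End (Ca X)) :=
  {aAct X} ∪ {f | ∃ i j, (q : ℕ) ≤ j ∧ f = eAct X i j}

lemma ASet_anti (q : ℕ+) : ASet X (q + 1) ⊆ ASet X q := by
  rintro f (hf | ⟨i, j, hj, rfl⟩)
  · exact Or.inl hf
  · refine Or.inr ⟨i, j, ?_, rfl⟩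
    have : ((q + 1 : ℕ+) : ℕ) = (q : ℕ) + 1 := rfl
    omega

lemma aAct_mem (q : ℕ+) : aAct X ∈ ASet X q := Or.inl rfl

lemma eAct_mem (q : ℕ+) (i : Idx X) (j : ℕ) (hj : (q : ℕ) ≤ j) :
    eAct X i j ∈ ASet X q := Or.inr ⟨i, j, hj, rfl⟩

lemma ASet_inter (h1X : 1 ∈ X) (hne : Nonempty (Idx X)) :
    (⋂ q, ASet X q) = {aAct X} := by
  apply subset_antisymm
  · intro f hf
    rw [Set.mem_iInter] at hf
    rcases hf 1 with h | ⟨i, j, hj, rfl⟩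
    · exact h
    · rcases hf ⟨j + 1, by omega⟩ with h | ⟨i', j', hj', heq⟩
      · exact h
      · obtain ⟨-, rfl⟩ := eAct_inj X h1X i' i j' j heq.symm
        simp at hj'
  · rintro f rfl
    exact Set.mem_iInter.mpr fun q => aAct_mem X q

lemma ASet_strict (h1X : 1 ∈ X) (i : Idx X) (q : ℕ+) : ASet X q ≠ ASet X (q + 1) := by
  intro h
  have hmem : eAct X i q ∈ ASet X (q + 1) := h ▸ eAct_mem X q i q le_rfl
  rcases hmem with hmem | ⟨i', j', hj', heq⟩
  · exact eAct_ne_aAct X h1X i q (by simpa using hmem)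
  · obtain ⟨-, rfl⟩ := eAct_inj X h1X i i' (q : ℕ) j' heq
    have : ((q + 1 : ℕ+) : ℕ) = (q : ℕ) + 1 := rfl
    omega


lemma lift_list (q : ℕ+) : ∀ (l : List (Function.End (Ca X))),
    (∀ g ∈ l, g ∈ ASet X q) →
    ∃ w : List (Lam X), w.map (ActL X) = l ∧
      ∀ ℓ ∈ w, ∀ (i : Idx X) (j : ℕ), ℓ = some (i, j) → (q : ℕ) ≤ j
  | [], _ => ⟨[], rfl, by simp⟩
  | g :: l, hmem => by
      obtain ⟨w, hw1, hw2⟩ :=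
        lift_list q l fun x hx => hmem x (List.mem_cons_of_mem g hx)
      rcases hmem g List.mem_cons_self with hg | ⟨i, j, hj, rfl⟩
      · refine ⟨none :: w, ?_, ?_⟩
        · show ActL X none :: List.map (ActL X) w = _; rw [hw1]
          simp only [Set.mem_singleton_iff] at hg
          rw [hg]; rfl
        · intro ℓ hℓ i j hℓ2
          rcases List.mem_cons.1 hℓ with rfl | hℓ
          · simp at hℓ2
          · exact hw2 ℓ hℓ i j hℓ2
      · refine ⟨some (i, j) :: w, ?_, ?_⟩
        · show ActL X (some (i, j)) :: List.map (ActL X) w = _; rw [hw1]; rfl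
        · intro ℓ hℓ i' j' hℓ2
          rcases List.mem_cons.1 hℓ with rfl | hℓ
          · have h' := Option.some_inj.mp hℓ2
            obtain ⟨rfl, rfl⟩ := Prod.ext_iff.mp h'
            exact hj
          · exact hw2 ℓ hℓ i' j' hℓ2

lemma common_subset (h1X : 1 ∈ X) (h : ℕ) (hh : 1 ≤ h) (hhX : h ∈ X)
    (f : Function.End (Ca X)) (hf : ∀ q : ℕ+, f ∈ prodSet (ASet X q) h) :
    f = aAct X ^ h := by
  have hword : ∀ q : ℕ+, ∃ w : List (Lam X), w.length = h ∧
      (∀ ℓ ∈ w, ∀ (i : Idx X) (j : ℕ), ℓ = some (i, j) → (q : ℕ) ≤ j) ∧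
      (w.map (ActL X)).prod = f := by
    intro q
    obtain ⟨l, hlen, hmem, hprod⟩ := (mem_prodSet_list (ASet X q) h hh f).1 (hf q)
    obtain ⟨w, hw1, hw2⟩ := lift_list X q l hmem
    refine ⟨w, ?_, hw2, by rw [hw1, hprod]⟩
    have hlw := congrArg List.length hw1
    rw [List.length_map] at hlw
    omega
  choose w hwlen hwmem hwprod using hword
  have hval : ∀ (q : ℕ+) (i : Idx X) (j : ℕ),
      (f (pt0 X) i).2.2 j
        = ((Multiset.count (some j) ↑((w q).map (proj X i)) : ℕ) : ZMod i.1) := by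
    intro q i j
    rw [← hwprod q, prod_component, c_value]
    show (0 : ZMod i.1) + _ = _
    rw [zero_add]
  have hdiv : ∀ (i : Idx X) (j : ℕ),
      i.1 ∣ Multiset.count (some j) ↑((w 1).map (proj X i)) := by
    intro i j
    haveI : NeZero i.1 := ⟨by have := two_le X h1X i; omega⟩
    set q' : ℕ+ := ⟨j + 1, by omega⟩ with hq'
    have h2 : Multiset.count (some j) ↑((w q').map (proj X i)) = 0 := by
      rw [Multiset.count_eq_zero]
      intro hmem'
      rw [Multiset.mem_coe, List.mem_map] at hmem'
      obtain ⟨ℓ, hℓmem, hℓ⟩ := hmem'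
      match ℓ, hℓ with
      | none, hℓ => exact absurd hℓ (by simp [proj])
      | some (i', j₂), hℓ =>
        rw [show proj X i (some (i', j₂)) = if i' = i then some j₂ else none from rfl] at hℓ
        by_cases hii : i' = i
        · rw [if_pos hii] at hℓ
          have hj₂ : j₂ = j := by simpa using hℓ
          have h4 := hwmem q' (some (i', j₂)) hℓmem i' j₂ rfl
          have h5 : j + 1 ≤ j₂ := h4
          omega
        · rw [if_neg hii] at hℓ
          exact absurd hℓ (by simp)
    have hv1 := hval 1 i j
    have hv2 := hval q' i j
    rw [h2] at hv2
    simp only [Nat.cast_zero] at hv2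
    rw [hv2] at hv1
    exact (ZMod.natCast_eq_zero_iff _ _).1 hv1.symm
  funext x
  funext i
  rw [← hwprod 1, prod_component, aAct_pow_apply]
  have hcore := core i.1 (two_le X h1X i) h (↑((w 1).map (proj X i)))
    (by rw [Multiset.coe_card]; simp [hwlen 1]) hh
    (fun j => hdiv i j)
  rcases hcore with ⟨-, hmEq, -⟩ | hA
  · exact absurd (hmEq ▸ hhX) i.2.1
  · rw [PP_coe] at hA
    rw [hA, End_pow_apply]
    rfl

lemma witness_spec (h1X : 1 ∈ X) (h : ℕ) (hh : 1 ≤ h) (hhX : h ∉ X) :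
    (∀ q : ℕ+, eAct X ⟨h, hhX, by omega⟩ 1 ^ h ∈ prodSet (ASet X q) h) ∧
      eAct X ⟨h, hhX, by omega⟩ 1 ^ h ≠ aAct X ^ h := by
  set i₀ : Idx X := ⟨h, hhX, by omega⟩ with hi₀
  have h2i : 2 ≤ i₀.1 := two_le X h1X i₀
  have hpow : ∀ j j' : ℕ, eAct X i₀ j ^ h = eAct X i₀ j' ^ h := by
    intro j j'
    funext x
    funext i
    rw [eAct_pow_apply, eAct_pow_apply]
    rcases eq_or_ne i i₀ with rfl | hne
    · rw [if_pos rfl, if_pos rfl]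
      show (Le i₀.1 j)^[i₀.1] (x i₀) = (Le i₀.1 j')^[i₀.1] (x i₀)
      rw [Le_iterate_m i₀.1 h2i j (x i₀), Le_iterate_m i₀.1 h2i j' (x i₀)]
    · rw [if_neg hne, if_neg hne]
  constructor
  · intro q
    rw [← hpow (q : ℕ) 1]
    have hmem : ({eAct X i₀ (q : ℕ)} : Set (Function.End (Ca X))) ⊆ ASet X q :=
      Set.singleton_subset_iff.mpr (eAct_mem X q i₀ (q : ℕ) le_rfl)
    refine prodSet_mono hmem h ?_
    rw [prodSet_singleton _ h hh]
    rfl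
  · intro hEq
    have h0 := congrFun (congrFun hEq (pt0 X)) i₀
    rw [eAct_pow_apply, if_pos rfl, aAct_pow_apply] at h0
    rw [show (Le i₀.1 1)^[h] (pt0 X i₀) = (Le i₀.1 1)^[i₀.1] (pt0 X i₀) from rfl,
      Le_iterate_m i₀.1 h2i 1 (pt0 X i₀),
      La_iterate i₀.1 h hh (pt0 X i₀)] at h0
    have hs := congrArg (fun p => p.2.1) h0
    simp only [Za, Fc, pt0] at hs
    simp at hs

lemma realize_main (h1X : 1 ∈ X) (h0X : 0 ∉ X) (hex : ∃ n, 1 ≤ n ∧ n ∉ X) :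
    ∃ (S : Type) (_ : Semigroup S) (A : ℕ+ → Set S),
      (∀ q : ℕ+, A (q + 1) ⊆ A q) ∧ {q : ℕ+ | A q ≠ A (q + 1)}.Infinite ∧
      X = {h : ℕ | 1 ≤ h ∧ prodSet (⋂ q, A q) h = ⋂ q, prodSet (A q) h} := by
  obtain ⟨n0, hn0, hn0X⟩ := hex
  have i0 : Idx X := ⟨n0, hn0X, by omega⟩
  refine ⟨Function.End (Ca X), inferInstance, ASet X, ASet_anti X, ?_, ?_⟩
  · have huniv : {q : ℕ+ | ASet X q ≠ ASet X (q + 1)} = Set.univ :=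
      Set.eq_univ_of_forall fun q => ASet_strict X h1X i0 q
    rw [huniv]
    exact Set.infinite_univ
  · ext n
    simp only [Set.mem_setOf_eq]
    constructor
    · intro hnX
      have hn1 : 1 ≤ n := by
        rcases Nat.eq_zero_or_pos n with rfl | h
        · exact absurd hnX h0X
        · exact h
      refine ⟨hn1, ?_⟩
      rw [ASet_inter X h1X ⟨i0⟩, prodSet_singleton _ n hn1]
      apply subset_antisymm
      · rintro f rfl
        refine Set.mem_iInter.mpr fun q => ?_
        have hmem : ({aAct X} : Set (Function.End (Ca X))) ⊆ ASet X q :=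
          Set.singleton_subset_iff.mpr (aAct_mem X q)
        refine prodSet_mono hmem n ?_
        rw [prodSet_singleton _ n hn1]
        rfl
      · intro f hf
        have := common_subset X h1X n hn1 hnX f fun q => Set.mem_iInter.mp hf q
        simpa using this
    · rintro ⟨hn1, heq⟩
      by_contra hnX
      obtain ⟨hmem, hneq⟩ := witness_spec X h1X n hn1 hnX
      have hW : eAct X ⟨n, hnX, by omega⟩ 1 ^ n ∈ prodSet (⋂ q, ASet X q) n := by
        rw [heq]
        exact Set.mem_iInter.mpr hmem
      rw [ASet_inter X h1X ⟨⟨n, hnX, by omega⟩⟩, prodSet_singleton _ n hn1] at hW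
      exact hneq (by simpa using hW)

end Global

/-! ### The case `X = {n | 1 ≤ n}` : an idempotent semigroup -/

structure MaxNat where
  val : ℕ

instance : Mul MaxNat := ⟨fun a b => ⟨max a.val b.val⟩⟩

instance : Semigroup MaxNat :=
  { mul_assoc := fun a b c => congrArg MaxNat.mk (max_assoc a.val b.val c.val) }

def BSet (q : ℕ+) : Set MaxNat := {x | (q : ℕ) ≤ x.val}

lemma BSet_mul (q : ℕ+) : BSet q * BSet q = BSet q := by
  ext x
  constructor
  · rintro ⟨a, ha, b, hb, rfl⟩
    show (q : ℕ) ≤ max a.val b.val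
    exact le_trans ha (le_max_left _ _)
  · intro hx
    refine ⟨x, hx, x, hx, ?_⟩
    show MaxNat.mk (max x.val x.val) = x
    rw [Nat.max_self]

lemma BSet_prodSet (q : ℕ+) : ∀ n, 1 ≤ n → prodSet (BSet q) n = BSet q
  | 1, _ => rfl
  | n + 2, _ => by
      rw [prodSet_succ, BSet_prodSet q (n + 1) (by omega), BSet_mul]

lemma BSet_iInter : (⋂ q, BSet q) = ∅ := by
  rw [Set.eq_empty_iff_forall_notMem]
  intro x hx
  have := Set.mem_iInter.mp hx ⟨x.val + 1, by omega⟩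
  have h2 : x.val + 1 ≤ x.val := this
  omega

lemma prodSet_empty {S : Type*} [Mul S] : ∀ n, prodSet (∅ : Set S) n = ∅
  | 0 => rfl
  | 1 => rfl
  | n + 2 => by rw [prodSet_succ, Set.mul_empty]

lemma realize_univ (X : Set ℕ) (h0X : 0 ∉ X) (hall : ∀ n, 1 ≤ n → n ∈ X) :
    ∃ (S : Type) (_ : Semigroup S) (A : ℕ+ → Set S),
      (∀ q : ℕ+, A (q + 1) ⊆ A q) ∧ {q : ℕ+ | A q ≠ A (q + 1)}.Infinite ∧
      X = {h : ℕ | 1 ≤ h ∧ prodSet (⋂ q, A q) h = ⋂ q, prodSet (A q) h} := by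
  refine ⟨MaxNat, inferInstance, BSet, ?_, ?_, ?_⟩
  · intro q x hx
    have h2 : ((q + 1 : ℕ+) : ℕ) ≤ x.val := hx
    have h3 : ((q + 1 : ℕ+) : ℕ) = (q : ℕ) + 1 := rfl
    show (q : ℕ) ≤ x.val
    omega
  · have huniv : {q : ℕ+ | BSet q ≠ BSet (q + 1)} = Set.univ := by
      refine Set.eq_univ_of_forall fun q => ?_
      intro h
      have hq : (⟨(q : ℕ)⟩ : MaxNat) ∈ BSet q := by
        show (q : ℕ) ≤ (q : ℕ)
        exact le_rfl
      rw [h] at hq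
      have h2 : ((q + 1 : ℕ+) : ℕ) ≤ (q : ℕ) := hq
      have h3 : ((q + 1 : ℕ+) : ℕ) = (q : ℕ) + 1 := rfl
      omega
    rw [huniv]
    exact Set.infinite_univ
  · ext n
    constructor
    · intro hnX
      have hn1 : 1 ≤ n := by
        rcases Nat.eq_zero_or_pos n with rfl | h
        · exact absurd hnX h0X
        · exact h
      refine ⟨hn1, ?_⟩
      rw [BSet_iInter, prodSet_empty n]
      have : ∀ q : ℕ+, prodSet (BSet q) n = BSet q := fun q => BSet_prodSet q n hn1
      rw [Set.iInter_congr this, BSet_iInter]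
    · rintro ⟨hn1, -⟩
      exact hall n hn1

end Stmt11

/-- (1) For every semigroup `S` and every asymptotically strictly decreasing sequence
`(A_q)_{q ≥ 1}` of subsets of `S`, the exponent `1` belongs to the product intersection
set `H_ℕ^S(A_q)`.  (2) Consequently, the global set `H_ℕ*` of all product intersection
sets of asymptotically strictly decreasing sequences in arbitrary semigroups equals
`{X ⊆ ℕ : 1 ∈ X}` (here `ℕ = {1, 2, …}`, so membership of `0` is excluded). -/
theorem stmt_11 :
    (∀ (S : Type*) (_ : Semigroup S) (A : ℕ+ → Set S),
      (∀ q : ℕ+, A (q + 1) ⊆ A q) → {q : ℕ+ | A q ≠ A (q + 1)}.Infinite →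
      1 ∈ {h : ℕ | 1 ≤ h ∧ prodSet (⋂ q, A q) h = ⋂ q, prodSet (A q) h}) ∧
    {X : Set ℕ | ∃ (S : Type) (_ : Semigroup S) (A : ℕ+ → Set S),
        (∀ q : ℕ+, A (q + 1) ⊆ A q) ∧ {q : ℕ+ | A q ≠ A (q + 1)}.Infinite ∧
        X = {h : ℕ | 1 ≤ h ∧ prodSet (⋂ q, A q) h = ⋂ q, prodSet (A q) h}}
      = {X : Set ℕ | 1 ∈ X ∧ 0 ∉ X} := by
  constructor
  · intro S _ A _ _
    exact ⟨le_rfl, rfl⟩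
  · ext X
    simp only [Set.mem_setOf_eq]
    constructor
    · rintro ⟨S, sg, A, -, -, rfl⟩
      refine ⟨⟨le_rfl, rfl⟩, ?_⟩
      rintro ⟨h01, -⟩
      omega
    · rintro ⟨h1X, h0X⟩
      by_cases hex : ∃ n, 1 ≤ n ∧ n ∉ X
      · exact Stmt11.realize_main X h1X h0X hex
      · push_neg at hex
        exact Stmt11.realize_univ X h0X hex
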